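/- The set {2^i * s : i ≥ 0} ∪ {2n+1 : n ∈ ℕ}, for a fixed even s ≥ 2, is not eventually periodic (not semilinear as a subset of ℕ). -/

import Mathlib

/-- A subset of ℕ is eventually periodic (semilinear) if there exist `N` and `p > 0`
such that for all `n ≥ N`, `n ∈ S ↔ n + p ∈ S`. -/
def EventuallyPeriodic (S : Set ℕ) : Prop :=
  ∃ N p : ℕ, 0 < p ∧ ∀ n ≥ N, (n ∈ S ↔ n + p ∈ S)

theorem stmt_0 (s : ℕ) (hs : Even s) (hs2 : 2 ≤ s) :
    ¬ EventuallyPeriodic ({n | ∃ i : ℕ, n = 2 ^ i * s} ∪ {n | Odd n}) := by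
  rintro ⟨N, p, hp, hper⟩
  obtain ⟨i, hi⟩ : ∃ i, N + p + 2 < 2 ^ i := ⟨N + p + 2, Nat.lt_two_pow_self⟩
  have hs0 : 0 < s := by omega
  have hbig : N + p + 2 < 2 ^ i * s := by
    calc N + p + 2 < 2 ^ i := hi
    _ ≤ 2 ^ i * s := Nat.le_mul_of_pos_right _ hs0
  have heven : Even (2 ^ i * s) := hs.mul_left _
  rcases Nat.even_or_odd p with hpe | hpo
  · -- p even : use n = 2^i * s
    have hmem : (2 ^ i * s) ∈ ({n | ∃ i : ℕ, n = 2 ^ i * s} ∪ {n | Odd n}) :=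
      Or.inl ⟨i, rfl⟩
    have := (hper (2 ^ i * s) (by omega)).mp hmem
    rcases this with ⟨j, hj⟩ | hodd
    · -- 2^i*s + p = 2^j*s forces j > i, then p ≥ 2^i*s > p
      have hij : i < j := by
        by_contra h
        push_neg at h
        have h1 : 2 ^ j ≤ 2 ^ i := Nat.pow_le_pow_right (by norm_num) h
        have h2 : 2 ^ j * s ≤ 2 ^ i * s := Nat.mul_le_mul_right s h1
        omega
      have h1 : 2 ^ (i + 1) ≤ 2 ^ j := Nat.pow_le_pow_right (by norm_num) hij
      have h2 : 2 ^ (i + 1) * s ≤ 2 ^ j * s := Nat.mul_le_mul_right s h1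
      have h3 : 2 ^ (i + 1) * s = 2 * (2 ^ i * s) := by ring
      omega
    · have : Even (2 ^ i * s + p) := heven.add hpe
      exact (Nat.not_odd_iff_even.mpr this) hodd
  · -- p odd : use n = 2^i * s + 2, which is even and not a power times s
    have hnot : (2 ^ i * s + 2) ∉ ({n | ∃ i : ℕ, n = 2 ^ i * s} ∪ {n | Odd n}) := by
      rintro (⟨j, hj⟩ | hodd)
      · rcases le_or_gt j i with h | h
        · have h1 : 2 ^ j ≤ 2 ^ i := Nat.pow_le_pow_right (by norm_num) h
          have h2 : 2 ^ j * s ≤ 2 ^ i * s := Nat.mul_le_mul_right s h1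
          omega
        · have h1 : 2 ^ (i + 1) ≤ 2 ^ j := Nat.pow_le_pow_right (by norm_num) h
          have h2 : 2 ^ (i + 1) * s ≤ 2 ^ j * s := Nat.mul_le_mul_right s h1
          have h3 : 2 ^ (i + 1) * s = 2 * (2 ^ i * s) := by ring
          omega
      · have : Even (2 ^ i * s + 2) := heven.add (by decide)
        exact (Nat.not_odd_iff_even.mpr this) hodd
    have hmem : (2 ^ i * s + 2 + p) ∈ ({n | ∃ i : ℕ, n = 2 ^ i * s} ∪ {n | Odd n}) :=
      Or.inr ((heven.add (by decide)).add_odd hpo)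
    exact hnot ((hper (2 ^ i * s + 2) (by omega)).mpr hmem)
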